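/- Let {C_r} be an ε-almost universal_2 code family in F_2^n (ε ≥ 1) with maximum dimension t_max = nR. Suppose the channel adds a fixed error x ∈ F_2^n of Hamming weight k, and decoding by minimum Hamming distance fails only if some nonzero codeword y ∈ C_r has weight ≤ k (y ≠ x). Then the average failure probability satisfies E_r[P_hd(x; C_r)] ≤ ε · 2^(-n·[1 - h(min{k/n, 1/2}) - R]_+), where h is binary entropy and [a]_+ = max{a, 0}. -/

import Mathlib

open scoped Classical

noncomputable def pr {I : Type*} [Fintype I] (P : I → Prop) : ℝ :=
  ((Finset.univ.filter P).card : ℝ) / (Fintype.card I : ℝ)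

noncomputable def wt {n : ℕ} (x : Fin n → ZMod 2) : ℕ :=
  (Finset.univ.filter (fun i => x i ≠ 0)).card

/-- Binary entropy function (base-2 logarithm). -/
noncomputable def H2 (p : ℝ) : ℝ := -(p * Real.logb 2 p) - (1 - p) * Real.logb 2 (1 - p)

lemma zmod2_ext (a b : ZMod 2) (h : a ≠ 0 ↔ b ≠ 0) : a = b := by
  revert h; revert a b; exact (by decide : ∀ a b : Fin 2, (a ≠ 0 ↔ b ≠ 0) → a = b)

lemma card_wt_le (n k : ℕ) :
    (Finset.univ.filter (fun y : Fin n → ZMod 2 => wt y ≤ k)).card ≤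
      ∑ i ∈ Finset.range (k+1), n.choose i := by
  classical
  have h1 : (Finset.univ.filter (fun y : Fin n → ZMod 2 => wt y ≤ k)).card
      = ∑ i ∈ Finset.range (k+1),
        ((Finset.univ.filter (fun y : Fin n → ZMod 2 => wt y ≤ k)).filter
          (fun y => wt y = i)).card := by
    apply Finset.card_eq_sum_card_fiberwise
    intro y hy
    simp only [Finset.mem_coe, Finset.mem_filter, Finset.mem_univ, true_and] at hy
    simpa [Finset.mem_range] using Nat.lt_succ_of_le hy
  rw [h1]
  apply Finset.sum_le_sum
  intro i _
  have : ((Finset.univ.filter (fun y : Fin n → ZMod 2 => wt y ≤ k)).filter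
      (fun y => wt y = i)).card ≤ (Finset.powersetCard i (Finset.univ : Finset (Fin n))).card := by
    apply Finset.card_le_card_of_injOn (fun y => Finset.univ.filter (fun j => y j ≠ 0))
    · intro y hy
      simp only [Finset.mem_coe, Finset.mem_filter] at hy
      simp [Finset.mem_powersetCard, ← hy.2, wt]
    · intro y _ z _ h
      simp only at h
      funext j
      apply zmod2_ext
      have := Finset.ext_iff.mp h j
      simpa using this
  simpa [Finset.card_powersetCard] using this

lemma choose_sum_le (n k : ℕ) (hk : 0 < k) (hkn : 2*k < n) :
    (∑ i ∈ Finset.range (k+1), (n.choose i : ℝ)) ≤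
      (2:ℝ) ^ ((n:ℝ) * H2 ((k:ℝ)/n)) := by
  have hn : 0 < n := by omega
  have hnR : (0:ℝ) < n := by exact_mod_cast hn
  set p : ℝ := (k:ℝ)/n with hp
  have hp0 : 0 < p := by positivity
  have hphalf : p < 1/2 := by
    rw [hp, div_lt_iff₀ hnR]
    have : (2*k : ℝ) < n := by exact_mod_cast hkn
    linarith
  have h1p : 0 < 1 - p := by linarith
  have hple : p ≤ 1 - p := by linarith
  have hkn' : k ≤ n := by omega
  have key : (∑ i ∈ Finset.range (k+1), (n.choose i : ℝ)) * (p^k * (1-p)^(n-k)) ≤ 1 := by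
    rw [Finset.sum_mul]
    have step1 : ∑ i ∈ Finset.range (k+1), (n.choose i : ℝ) * (p^k * (1-p)^(n-k)) ≤
        ∑ i ∈ Finset.range (k+1), (n.choose i : ℝ) * (p^i * (1-p)^(n-i)) := by
      apply Finset.sum_le_sum
      intro i hi
      have hik : i ≤ k := Nat.lt_succ_iff.mp (Finset.mem_range.mp hi)
      have e1 : p^k = p^i * p^(k-i) := by rw [← pow_add]; congr 1; omega
      have e2 : (1-p)^(n-i) = (1-p)^(n-k) * (1-p)^(k-i) := by rw [← pow_add]; congr 1; omega
      have e3 : p^(k-i) ≤ (1-p)^(k-i) := pow_le_pow_left₀ hp0.le hple _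
      have : p^k * (1-p)^(n-k) ≤ p^i * (1-p)^(n-i) := by
        rw [e1, e2]
        calc p^i * p^(k-i) * (1-p)^(n-k) ≤ p^i * (1-p)^(k-i) * (1-p)^(n-k) := by
              apply mul_le_mul_of_nonneg_right _ (by positivity)
              exact mul_le_mul_of_nonneg_left e3 (by positivity)
          _ = p^i * ((1-p)^(n-k) * (1-p)^(k-i)) := by ring
      exact mul_le_mul_of_nonneg_left this (by positivity)
    have step2 : ∑ i ∈ Finset.range (k+1), (n.choose i : ℝ) * (p^i * (1-p)^(n-i)) ≤
        ∑ i ∈ Finset.range (n+1), (n.choose i : ℝ) * (p^i * (1-p)^(n-i)) := by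
      apply Finset.sum_le_sum_of_subset_of_nonneg
      · exact Finset.range_subset_range.mpr (by omega)
      · intro i _ _; positivity
    have step3 : ∑ i ∈ Finset.range (n+1), (n.choose i : ℝ) * (p^i * (1-p)^(n-i)) = 1 := by
      calc ∑ i ∈ Finset.range (n+1), (n.choose i : ℝ) * (p^i * (1-p)^(n-i))
          = ∑ i ∈ Finset.range (n+1), p^i * (1-p)^(n-i) * (n.choose i : ℝ) :=
            Finset.sum_congr rfl (fun i _ => by ring)
        _ = (p + (1-p))^n := (add_pow p (1-p) n).symm
        _ = 1 := by norm_num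
    linarith
  have hpos : (0:ℝ) < p^k * (1-p)^(n-k) := by positivity
  have main : (∑ i ∈ Finset.range (k+1), (n.choose i : ℝ)) ≤ 1 / (p^k * (1-p)^(n-k)) :=
    (le_div_iff₀ hpos).mpr key
  have hnp : (n:ℝ) * p = k := by rw [hp]; field_simp [hnR.ne']
  have hn1p : (n:ℝ) * (1-p) = ((n-k : ℕ):ℝ) := by
    rw [Nat.cast_sub hkn']
    rw [mul_sub, hnp]; ring
  have hexp : (n:ℝ) * H2 p =
      Real.logb 2 p * (-(k:ℝ)) + Real.logb 2 (1-p) * (-((n-k:ℕ):ℝ)) := by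
    unfold H2
    rw [mul_sub, mul_neg, ← mul_assoc, ← mul_assoc, hnp]
    rw [show (n:ℝ) * (1-p) * Real.logb 2 (1-p) = ((n-k:ℕ):ℝ) * Real.logb 2 (1-p) by
      rw [← hn1p]]
    ring
  have hrw : (2:ℝ) ^ ((n:ℝ) * H2 p) = 1 / (p^k * (1-p)^(n-k)) := by
    rw [hexp, Real.rpow_add (by norm_num : (0:ℝ) < 2)]
    rw [Real.rpow_mul (by norm_num : (0:ℝ) ≤ 2), Real.rpow_mul (by norm_num : (0:ℝ) ≤ 2)]
    rw [Real.rpow_logb (by norm_num) (by norm_num) hp0,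
        Real.rpow_logb (by norm_num) (by norm_num) h1p]
    rw [Real.rpow_neg hp0.le, Real.rpow_neg h1p.le]
    rw [Real.rpow_natCast, Real.rpow_natCast]
    field_simp
  rw [hrw]
  exact main

lemma count_bound (n k : ℕ) (hn : 0 < n) :
    ((Finset.univ.filter (fun y : Fin n → ZMod 2 => wt y ≤ k)).card : ℝ) ≤
      (2:ℝ) ^ ((n:ℝ) * H2 (min ((k:ℝ)/n) (1/2))) := by
  have hnR : (0:ℝ) < n := by exact_mod_cast hn
  rcases le_or_gt n (2*k) with h | h
  · have hmin : min ((k:ℝ)/n) (1/2) = 1/2 := by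
      apply min_eq_right
      rw [le_div_iff₀ hnR]
      have : (n:ℝ) ≤ 2*k := by exact_mod_cast h
      linarith
    have hH : H2 (1/2) = 1 := by
      have hlog : Real.logb 2 (1/2 : ℝ) = -1 := by
        rw [show (1/2 : ℝ) = 2⁻¹ by norm_num, Real.logb_inv,
          Real.logb_self_eq_one (by norm_num : (1:ℝ) < 2)]
      unfold H2
      norm_num [hlog]
    rw [hmin, hH, mul_one]
    calc ((Finset.univ.filter (fun y : Fin n → ZMod 2 => wt y ≤ k)).card : ℝ)
        ≤ (Fintype.card (Fin n → ZMod 2) : ℝ) := by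
          exact_mod_cast Finset.card_filter_le _ _
      _ = ((2^n : ℕ) : ℝ) := by
          rw [Fintype.card_fun, ZMod.card, Fintype.card_fin]
      _ = (2:ℝ) ^ (n:ℝ) := by
          push_cast
          rw [Real.rpow_natCast]
  · rcases Nat.eq_zero_or_pos k with hk | hk
    · subst hk
      have hH : H2 0 = 0 := by unfold H2; simp
      simp only [Nat.cast_zero, zero_div]
      rw [min_eq_left (by norm_num : (0:ℝ) ≤ 1/2), hH, mul_zero, Real.rpow_zero]
      have h0 := card_wt_le n 0
      simp only [zero_add, Finset.range_one, Finset.sum_singleton,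
        Nat.choose_zero_right] at h0
      exact_mod_cast h0
    · have hmin : min ((k:ℝ)/n) (1/2 : ℝ) = (k:ℝ)/n := by
        apply min_eq_left
        rw [div_le_iff₀ hnR]
        have : (2*k : ℝ) < n := by exact_mod_cast h
        linarith
      rw [hmin]
      calc ((Finset.univ.filter (fun y : Fin n → ZMod 2 => wt y ≤ k)).card : ℝ)
          ≤ (∑ i ∈ Finset.range (k+1), (n.choose i : ℝ)) := by
            exact_mod_cast card_wt_le n k
        _ ≤ (2:ℝ) ^ ((n:ℝ) * H2 ((k:ℝ)/n)) := choose_sum_le n k hk h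

lemma pr_mono {I : Type*} [Fintype I] [Nonempty I] (P Q : I → Prop)
    (h : ∀ r, P r → Q r) : pr P ≤ pr Q := by
  unfold pr
  have hN : (0:ℝ) < (Fintype.card I : ℝ) := by exact_mod_cast Fintype.card_pos
  gcongr
  exact h _

lemma pr_union {I : Type*} [Fintype I] [Nonempty I] {α : Type*} (S : Finset α)
    (Q : α → I → Prop) :
    pr (fun r => ∃ y ∈ S, Q y r) ≤ ∑ y ∈ S, pr (Q y) := by
  unfold pr
  rw [← Finset.sum_div]
  have hN : (0:ℝ) < (Fintype.card I : ℝ) := by exact_mod_cast Fintype.card_pos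
  gcongr
  have key : ∀ (inst : DecidablePred (fun r => ∃ y ∈ S, Q y r)),
      (((@Finset.filter I (fun r => ∃ y ∈ S, Q y r) inst Finset.univ).card : ℝ) ≤
        ∑ y ∈ S, ((Finset.univ.filter (Q y)).card : ℝ)) := by
    intro inst
    have hsub : @Finset.filter I (fun r => ∃ y ∈ S, Q y r) inst Finset.univ ⊆
        S.biUnion (fun y => Finset.univ.filter (Q y)) := by
      intro r hr
      obtain ⟨y, hyS, hyQ⟩ := (Finset.mem_filter.mp hr).2
      exact Finset.mem_biUnion.mpr ⟨y, hyS, by simp [hyQ]⟩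
    calc ((@Finset.filter I (fun r => ∃ y ∈ S, Q y r) inst Finset.univ).card : ℝ)
        ≤ ((S.biUnion (fun y => Finset.univ.filter (Q y))).card : ℝ) := by
          exact_mod_cast Finset.card_le_card hsub
      _ ≤ ∑ y ∈ S, ((Finset.univ.filter (Q y)).card : ℝ) := by
          exact_mod_cast Finset.card_biUnion_le
  exact key _

set_option maxHeartbeats 1000000 in
/-- minimum-distance decoding failure bound for an `ε`-almost universal₂
family with maximum dimension `t = nR`, against a fixed error `x` of weight `k`:
`E_r[P_hd(x;C_r)] ≤ ε · 2^(-n[1 - h(min{k/n,1/2}) - R]_+)`. -/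
theorem stmt11 {n t k : ℕ} (hn : 0 < n) {I : Type*} [Fintype I] [Nonempty I]
    (C : I → Submodule (ZMod 2) (Fin n → ZMod 2)) (ε : ℝ) (hε : 1 ≤ ε)
    (hdim : ∀ r, Module.finrank (ZMod 2) (C r) ≤ t)
    (huniv : ∀ y : Fin n → ZMod 2, y ≠ 0 →
      pr (fun r => y ∈ C r) ≤ (2 : ℝ) ^ t / 2 ^ n * ε)
    (x : Fin n → ZMod 2) (hx : wt x = k) :
    pr (fun r => ∃ y ∈ C r, y ≠ 0 ∧ y ≠ x ∧ wt y ≤ k) ≤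
      ε * (2 : ℝ) ^
        (-((n : ℝ) * max (1 - H2 (min ((k : ℝ) / n) (1 / 2)) - (t : ℝ) / n) 0)) := by
  have hnR : (0:ℝ) < n := by exact_mod_cast hn
  have hN : (0:ℝ) < (Fintype.card I : ℝ) := by
    exact_mod_cast Fintype.card_pos
  set h := H2 (min ((k : ℝ) / n) (1 / 2)) with hh
  have pr_le_one : ∀ P : I → Prop, pr P ≤ 1 := by
    intro P
    unfold pr
    rw [div_le_one hN]
    exact_mod_cast Finset.card_filter_le _ _
  rcases le_or_gt (1 - h - (t:ℝ)/n) 0 with hc | hc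
  · rw [max_eq_right hc, mul_zero, neg_zero, Real.rpow_zero, mul_one]
    exact le_trans (pr_le_one _) hε
  · rw [max_eq_left hc.le]
    set T : Finset (Fin n → ZMod 2) :=
      Finset.univ.filter (fun y => y ≠ 0 ∧ y ≠ x ∧ wt y ≤ k) with hT
    have hpr1 : pr (fun r => ∃ y ∈ C r, y ≠ 0 ∧ y ≠ x ∧ wt y ≤ k) ≤
        (T.card : ℝ) * ((2 : ℝ) ^ t / 2 ^ n * ε) := by
      have step1 : pr (fun r => ∃ y ∈ C r, y ≠ 0 ∧ y ≠ x ∧ wt y ≤ k) ≤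
          pr (fun r => ∃ y ∈ T, y ∈ C r) := by
        apply pr_mono
        rintro r ⟨y, hyC, hy0, hyx, hyw⟩
        exact ⟨y, by simp [hT, hy0, hyx, hyw], hyC⟩
      have step2 := pr_union T (fun y r => y ∈ C r)
      have step3 : ∑ y ∈ T, pr (fun r => y ∈ C r) ≤
          (T.card : ℝ) * ((2 : ℝ) ^ t / 2 ^ n * ε) := by
        calc ∑ y ∈ T, pr (fun r => y ∈ C r)
            ≤ ∑ _y ∈ T, ((2 : ℝ) ^ t / 2 ^ n * ε) := by
              apply Finset.sum_le_sum
              intro y hy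
              have hy0 : y ≠ 0 := by
                simp only [hT, Finset.mem_filter] at hy
                exact hy.2.1
              exact huniv y hy0
          _ = (T.card : ℝ) * ((2 : ℝ) ^ t / 2 ^ n * ε) := by
              rw [Finset.sum_const, nsmul_eq_mul]
      exact le_trans step1 (le_trans step2 step3)
    have hTcard : (T.card : ℝ) ≤ (2:ℝ) ^ ((n:ℝ) * h) := by
      have hsubT : T ⊆ Finset.univ.filter (fun y : Fin n → ZMod 2 => wt y ≤ k) := by
        intro y hy
        simp only [hT, Finset.mem_filter] at hy ⊢
        exact ⟨Finset.mem_univ y, hy.2.2.2⟩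
      calc (T.card : ℝ) ≤
          ((Finset.univ.filter (fun y : Fin n → ZMod 2 => wt y ≤ k)).card : ℝ) := by
            exact_mod_cast Finset.card_le_card hsubT
        _ ≤ (2:ℝ) ^ ((n:ℝ) * h) := count_bound n k hn
    have hεpos : 0 < ε := lt_of_lt_of_le one_pos hε
    have hbpos : (0:ℝ) < (2 : ℝ) ^ t / 2 ^ n * ε := by positivity
    have hfinal : (2:ℝ) ^ ((n:ℝ) * h) * ((2 : ℝ) ^ t / 2 ^ n * ε) =
        ε * (2 : ℝ) ^ (-((n : ℝ) * (1 - h - (t:ℝ)/n))) := by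
      have he : -((n : ℝ) * (1 - h - (t:ℝ)/n)) = (n:ℝ) * h + ((t:ℝ) - (n:ℝ)) := by
        field_simp
        ring
      rw [he, Real.rpow_add (by norm_num : (0:ℝ) < 2),
        Real.rpow_sub (by norm_num : (0:ℝ) < 2),
        Real.rpow_natCast, Real.rpow_natCast]
      ring
    calc pr (fun r => ∃ y ∈ C r, y ≠ 0 ∧ y ≠ x ∧ wt y ≤ k)
        ≤ (T.card : ℝ) * ((2 : ℝ) ^ t / 2 ^ n * ε) := hpr1
      _ ≤ (2:ℝ) ^ ((n:ℝ) * h) * ((2 : ℝ) ^ t / 2 ^ n * ε) :=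
          mul_le_mul_of_nonneg_right hTcard hbpos.le
      _ = ε * (2 : ℝ) ^ (-((n : ℝ) * (1 - h - (t:ℝ)/n))) := hfinal
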